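/- For $\gamma \in (0, 1/2]$, the function $\bar{f}(\gamma) = 12 - 24\gamma - 27\sqrt{1-\gamma} + 23\sqrt{\gamma} + 4\gamma(\sqrt{\gamma} + \sqrt{1-\gamma})$ is nondecreasing and satisfies $\bar{f}(\gamma) \leq 0$, with $\bar{f}(1/2) = 0$. -/

import Mathlib

noncomputable def fbar (γ : ℝ) : ℝ :=
  12 - 24 * γ - 27 * Real.sqrt (1 - γ) + 23 * Real.sqrt γ
    + 4 * γ * (Real.sqrt γ + Real.sqrt (1 - γ))

lemma fbar_hasDerivAt (x : ℝ) (hx : 0 < x) (hx1 : x < 1) :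
    HasDerivAt fbar
      (-24 - 27 * (-(1 / (2 * Real.sqrt (1 - x)))) + 23 * (1 / (2 * Real.sqrt x))
        + (4 * (Real.sqrt x + Real.sqrt (1 - x))
          + 4 * x * (1 / (2 * Real.sqrt x) + -(1 / (2 * Real.sqrt (1 - x)))))) x := by
  have h1x : (1 : ℝ) - x ≠ 0 := by linarith
  have h1 : HasDerivAt (fun γ : ℝ => Real.sqrt (1 - γ)) (-(1 / (2 * Real.sqrt (1 - x)))) x := by
    have := (Real.hasDerivAt_sqrt h1x).comp x
      ((hasDerivAt_const x (1 : ℝ)).sub (hasDerivAt_id x))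
    exact this.congr_deriv (by ring)
  have h2 : HasDerivAt Real.sqrt (1 / (2 * Real.sqrt x)) x := Real.hasDerivAt_sqrt hx.ne'
  have h3 : HasDerivAt (fun γ : ℝ => 4 * γ) 4 x := by
    simpa using (hasDerivAt_id x).const_mul (4 : ℝ)
  have h4 : HasDerivAt (fun γ : ℝ => 4 * γ * (Real.sqrt γ + Real.sqrt (1 - γ)))
      (4 * (Real.sqrt x + Real.sqrt (1 - x))
        + 4 * x * (1 / (2 * Real.sqrt x) + -(1 / (2 * Real.sqrt (1 - x))))) x :=
    h3.mul (h2.add h1)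
  have h5 : HasDerivAt (fun γ : ℝ =>
      12 - 24 * γ - 27 * Real.sqrt (1 - γ) + 23 * Real.sqrt γ)
      (-24 - 27 * (-(1 / (2 * Real.sqrt (1 - x)))) + 23 * (1 / (2 * Real.sqrt x))) x := by
    have := (((hasDerivAt_const x (12 : ℝ)).sub ((hasDerivAt_id x).const_mul 24)).sub
      (h1.const_mul 27)).add (h2.const_mul 23)
    exact this.congr_deriv (by ring)
  exact h5.add h4

lemma fbar_deriv_nonneg (x : ℝ) (hx : 0 < x) (hx1 : x < 1) :
    0 ≤ -24 - 27 * (-(1 / (2 * Real.sqrt (1 - x)))) + 23 * (1 / (2 * Real.sqrt x))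
        + (4 * (Real.sqrt x + Real.sqrt (1 - x))
          + 4 * x * (1 / (2 * Real.sqrt x) + -(1 / (2 * Real.sqrt (1 - x))))) := by
  set s := Real.sqrt x with hsdef
  set t := Real.sqrt (1 - x) with htdef
  have hs : 0 < s := Real.sqrt_pos.mpr hx
  have ht : 0 < t := Real.sqrt_pos.mpr (by linarith)
  have hs2 : s ^ 2 = x := Real.sq_sqrt hx.le
  have ht2 : t ^ 2 = 1 - x := Real.sq_sqrt (by linarith)
  have hs1 : s ≤ 1 := by nlinarith
  have ht1 : t ≤ 1 := by nlinarith
  have hst : s ^ 2 + t ^ 2 = 1 := by linarith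
  have hsum : 1 ≤ s + t := by nlinarith [mul_pos hs ht]
  have h2st : (0 : ℝ) < 2 * s * t := by positivity
  rw [← mul_nonneg_iff_of_pos_right h2st]
  have key : (-24 - 27 * (-(1 / (2 * t))) + 23 * (1 / (2 * s))
        + (4 * (s + t) + 4 * x * (1 / (2 * s) + -(1 / (2 * t))))) * (2 * s * t)
      = -48 * s * t + 27 * s + 23 * t + 12 * s ^ 2 * t + 8 * s * t ^ 2 - 4 * s ^ 3 := by
    rw [← hs2]
    field_simp
    ring
  rw [key]
  nlinarith [mul_pos hs ht, mul_pos (mul_pos hs ht) hs, mul_pos (mul_pos hs ht) ht,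
    mul_nonneg (mul_nonneg hs.le ht.le) (by linarith : (0:ℝ) ≤ s + t - 1)]

lemma fbar_mono : MonotoneOn fbar (Set.Icc (0 : ℝ) (1 / 2)) := by
  have hc : ContinuousOn fbar (Set.Icc (0 : ℝ) (1 / 2)) := by
    unfold fbar; fun_prop
  have hint : interior (Set.Icc (0 : ℝ) (1 / 2)) = Set.Ioo (0 : ℝ) (1 / 2) := interior_Icc
  apply monotoneOn_of_deriv_nonneg (convex_Icc _ _) hc
  · rw [hint]
    intro x hx
    exact (fbar_hasDerivAt x hx.1 (by linarith [hx.2])).differentiableAt.differentiableWithinAt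
  · rw [hint]
    intro x hx
    rw [(fbar_hasDerivAt x hx.1 (by linarith [hx.2])).deriv]
    exact fbar_deriv_nonneg x hx.1 (by linarith [hx.2])

theorem stmt_13 :
    MonotoneOn (fun γ : ℝ =>
        12 - 24 * γ - 27 * Real.sqrt (1 - γ) + 23 * Real.sqrt γ
          + 4 * γ * (Real.sqrt γ + Real.sqrt (1 - γ)))
      (Set.Ioc (0 : ℝ) (1 / 2)) ∧
    (∀ γ ∈ Set.Ioc (0 : ℝ) (1 / 2),
      12 - 24 * γ - 27 * Real.sqrt (1 - γ) + 23 * Real.sqrt γ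
        + 4 * γ * (Real.sqrt γ + Real.sqrt (1 - γ)) ≤ 0) ∧
    12 - 24 * (1 / 2 : ℝ) - 27 * Real.sqrt (1 - 1 / 2) + 23 * Real.sqrt (1 / 2)
      + 4 * (1 / 2) * (Real.sqrt (1 / 2) + Real.sqrt (1 - 1 / 2)) = 0 := by
  have hmono : MonotoneOn fbar (Set.Ioc (0 : ℝ) (1 / 2)) :=
    fbar_mono.mono (Set.Ioc_subset_Icc_self)
  have hval : fbar (1 / 2) = 0 := by
    unfold fbar
    rw [show (1 : ℝ) - 1 / 2 = 1 / 2 by norm_num]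
    ring
  refine ⟨hmono, ?_, ?_⟩
  · intro γ hγ
    have := hmono hγ (Set.mem_Ioc.mpr ⟨by norm_num, le_refl _⟩) hγ.2
    calc (12 : ℝ) - 24 * γ - 27 * Real.sqrt (1 - γ) + 23 * Real.sqrt γ
        + 4 * γ * (Real.sqrt γ + Real.sqrt (1 - γ)) = fbar γ := rfl
      _ ≤ fbar (1 / 2) := this
      _ = 0 := hval
  · have := hval
    unfold fbar at this
    linarith
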